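/- Fix 0 < δ < 1 and ε > 0, and suppose a = a(t) satisfies t^{−δ/2+ε} ≤ a(t) ≤ t^{−δ/3−ε} for all large t; set k := t^{δ−1}(1−a). Then there exist C > 0 and t₀ > 0, depending only on δ and ε, such that for all t ≥ t₀ and all λ with t^{δ−1}/(1−t^{δ−1}) ≤ λ ≤ t^{1−δ}−1: | J_{B1}(t;λ) − exp(i t F(1−t^{δ−1};λ) − i ω²)·t^{−1/2}·√(2/(1+λ_c))·∫_{ω}^{ω + a√(λ_c t/2)} e^{iξ²} dξ | ≤ C·t^{−1/2 + 3δ/2}·a⁴, where the Fresnel integral is over the real segment [ω, ω + a√(λ_c t/2)]. -/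

import Mathlib

open MeasureTheory

noncomputable section

/-- `λ_c := t^(δ-1)/(1-t^(δ-1))`. -/
def lamc (δ t : ℝ) : ℝ := t ^ (δ - 1) / (1 - t ^ (δ - 1))

/-- `ω := √(λ_c t/2)·ln(1+Λ)/(1+λ_c)` with `1+Λ = λ/λ_c`. -/
def omegL (δ t lam : ℝ) : ℝ :=
  Real.sqrt (lamc δ t * t / 2) * Real.log (lam / lamc δ t) / (1 + lamc δ t)

/-- The real-valued phase `F(x;λ) := (1−x)·ln(1−x) + x·ln x + x·ln λ`. -/
def Freal (lam x : ℝ) : ℝ :=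
  (1 - x) * Real.log (1 - x) + x * Real.log x + x * Real.log lam

/-- `J_{B1}(t;λ) := ∫_{1−t^{δ−1}}^{1−k} (1−x)^{−1/2}·e^{i t F(x;λ)} dx`. -/
def JB1 (δ t lam k : ℝ) : ℂ :=
  ∫ x in (1 - t ^ (δ - 1))..(1 - k),
    (((1 - x) ^ (-(1 : ℝ) / 2) : ℝ) : ℂ) *
      Complex.exp (Complex.I * (t : ℂ) * ((Freal lam x : ℝ) : ℂ))

lemma abs_sub_le_of_mem_uIcc' {b y s : ℝ} (hs : s ∈ Set.uIcc b y) : |s - b| ≤ |y - b| := by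
  rcases le_total b y with h | h
  · rw [Set.uIcc_of_le h] at hs
    rw [abs_of_nonneg (by linarith [hs.1]), abs_of_nonneg (by linarith)]
    linarith [hs.2]
  · rw [Set.uIcc_of_ge h] at hs
    rw [abs_of_nonpos (by linarith [hs.2]), abs_of_nonpos (by linarith)]
    linarith [hs.1]

lemma psi_taylor {m b y : ℝ} (hm : 0 < m) (hb : m ≤ b) (hy : m ≤ y) :
    |y * Real.log y - b * Real.log b - (Real.log b + 1) * (y - b) - (y - b)^2/(2*b)|
      ≤ |y - b|^3 / m^2 := by
  have hconv : Convex ℝ (Set.uIcc b y) := convex_uIcc b y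
  have hbs : b ∈ Set.uIcc b y := Set.left_mem_uIcc
  have hys : y ∈ Set.uIcc b y := Set.right_mem_uIcc
  have hmem : ∀ z ∈ Set.uIcc b y, m ≤ z := by
    intro z hz
    rcases le_total b y with h | h
    · rw [Set.uIcc_of_le h] at hz; linarith [hz.1]
    · rw [Set.uIcc_of_ge h] at hz; linarith [hz.1]
  have hb0 : (0:ℝ) < b := lt_of_lt_of_le hm hb
  set E : ℝ → ℝ := fun z => Real.log z - Real.log b - (z - b)/b with hEdef
  have hEd : ∀ z ∈ Set.uIcc b y, HasDerivWithinAt E (z⁻¹ - 1/b) (Set.uIcc b y) z := by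
    intro z hz
    have hz0 : (0:ℝ) < z := lt_of_lt_of_le hm (hmem z hz)
    have h1 : HasDerivAt E (z⁻¹ - 1/b) z := by
      have hl := (Real.hasDerivAt_log (ne_of_gt hz0)).sub_const (Real.log b)
      have h2 : HasDerivAt (fun w : ℝ => (w - b)/b) (1/b) z := by
        simpa using ((hasDerivAt_id z).sub_const b).div_const b
      exact hl.sub h2
    exact h1.hasDerivWithinAt
  have hEbound : ∀ z ∈ Set.uIcc b y, ‖z⁻¹ - 1/b‖ ≤ |y - b| / m^2 := by
    intro z hz
    have hz0 : (0:ℝ) < z := lt_of_lt_of_le hm (hmem z hz)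
    have : z⁻¹ - 1/b = (b - z)/(z*b) := by field_simp
    rw [Real.norm_eq_abs, this, abs_div]
    have h1 : |b - z| ≤ |y - b| := by
      rw [show |b - z| = |z - b| from abs_sub_comm b z]
      exact abs_sub_le_of_mem_uIcc' hz
    have h2 : m^2 ≤ |z*b| := by
      rw [abs_of_pos (mul_pos hz0 hb0)]
      calc m^2 = m*m := sq m
        _ ≤ z*b := mul_le_mul (hmem z hz) hb (le_of_lt hm) (le_of_lt hz0)
    exact div_le_div₀ (abs_nonneg _) h1 (pow_pos hm 2) h2
  have hEest : ∀ z ∈ Set.uIcc b y, |E z| ≤ |y - b|^2 / m^2 := by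
    intro z hz
    have hE0 : E b = 0 := by simp [hEdef]
    have := hconv.norm_image_sub_le_of_norm_hasDerivWithin_le hEd hEbound hbs hz
    rw [hE0, sub_zero, Real.norm_eq_abs, Real.norm_eq_abs] at this
    calc |E z| ≤ |y - b| / m^2 * |z - b| := this
      _ ≤ |y - b| / m^2 * |y - b| := by
          apply mul_le_mul_of_nonneg_left (abs_sub_le_of_mem_uIcc' hz)
          positivity
      _ = |y - b|^2 / m^2 := by ring
  set D : ℝ → ℝ := fun z =>
    z * Real.log z - b * Real.log b - (Real.log b + 1) * (z - b) - (z - b)^2/(2*b) with hDdef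
  have hDd : ∀ z ∈ Set.uIcc b y, HasDerivWithinAt D (E z) (Set.uIcc b y) z := by
    intro z hz
    have hz0 : (0:ℝ) < z := lt_of_lt_of_le hm (hmem z hz)
    have h1 : HasDerivAt (fun w : ℝ => w * Real.log w) (Real.log z + z * z⁻¹) z := by
      exact ((hasDerivAt_id' (x := z)).mul (Real.hasDerivAt_log (ne_of_gt hz0))).congr_deriv (by ring)
    have h2 : HasDerivAt (fun w : ℝ => (Real.log b + 1) * (w - b)) (Real.log b + 1) z := by
      simpa using ((hasDerivAt_id z).sub_const b).const_mul (Real.log b + 1)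
    have h3 : HasDerivAt (fun w : ℝ => (w - b)^2/(2*b)) (2*(z-b)/(2*b)) z := by
      have := (((hasDerivAt_id z).sub_const b).pow 2).div_const (2*b)
      simpa using this
    have h4 : HasDerivAt D (Real.log z + z * z⁻¹ - 0 - (Real.log b + 1) - 2*(z-b)/(2*b)) z :=
      (((h1.sub_const (b * Real.log b)).sub h2).sub h3).congr_deriv (by ring)
    have heq : Real.log z + z * z⁻¹ - 0 - (Real.log b + 1) - 2*(z-b)/(2*b) = E z := by
      rw [hEdef]
      field_simp
      ring
    rw [heq] at h4
    exact h4.hasDerivWithinAt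
  have hDbound : ∀ z ∈ Set.uIcc b y, ‖E z‖ ≤ |y - b|^2 / m^2 := fun z hz => hEest z hz
  have hD0 : D b = 0 := by simp [hDdef]
  have := hconv.norm_image_sub_le_of_norm_hasDerivWithin_le hDd hDbound hbs hys
  rw [hD0, sub_zero, Real.norm_eq_abs, Real.norm_eq_abs] at this
  calc |D y| ≤ |y - b|^2 / m^2 * |y - b| := this
    _ = |y - b|^3 / m^2 := by ring

lemma expI_sub (α β : ℝ) (h : |α - β| ≤ 1) :
    ‖Complex.exp (Complex.I * α) - Complex.exp (Complex.I * β)‖ ≤ 2 * |α - β| := by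
  have key : Complex.exp (Complex.I * α) - Complex.exp (Complex.I * β)
      = Complex.exp (Complex.I * β) * (Complex.exp (Complex.I * ((α - β : ℝ) : ℂ)) - 1) := by
    rw [mul_sub, mul_one, ← Complex.exp_add]
    congr 1
    push_cast
    ring
  have habsI : ‖Complex.I * ((α - β : ℝ) : ℂ)‖ = |α - β| := by
    rw [norm_mul, Complex.norm_I, one_mul, Complex.norm_real, Real.norm_eq_abs]
  have h1 : ‖Complex.exp (Complex.I * β)‖ = 1 := by
    rw [Complex.norm_exp]
    simp
  rw [key, norm_mul, h1, one_mul]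
  calc ‖Complex.exp (Complex.I * ((α - β : ℝ) : ℂ)) - 1‖
      ≤ 2 * ‖Complex.I * ((α - β : ℝ) : ℂ)‖ :=
        Complex.norm_exp_sub_one_le (by rw [habsI]; exact h)
    _ = 2 * |α - β| := by rw [habsI]

lemma cube_le_self {u : ℝ} (h0 : 0 < u) (h1 : u ≤ 1) : u^3 ≤ u := by
  nlinarith [mul_nonneg (mul_nonneg h0.le (by linarith : (0:ℝ) ≤ 1-u)) (by linarith : (0:ℝ) ≤ 1+u)]

lemma sqrt_const_combine {q s tt uu : ℝ} (htt : 0 < tt) (huu : 0 < uu)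
    (h2 : q * s = Real.sqrt uu * Real.sqrt tt) :
    (Real.sqrt tt)⁻¹ * q * (s / uu) = (Real.sqrt uu)⁻¹ := by
  have hst : Real.sqrt tt ≠ 0 := ne_of_gt (Real.sqrt_pos.mpr htt)
  have hsu : Real.sqrt uu ≠ 0 := ne_of_gt (Real.sqrt_pos.mpr huu)
  have husq : Real.sqrt uu * Real.sqrt uu = uu := Real.mul_self_sqrt huu.le
  rw [show (Real.sqrt tt)⁻¹ * q * (s/uu) = (q*s)/(Real.sqrt tt * uu) by field_simp, h2]
  rw [div_eq_iff (by positivity)]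
  field_simp
  linear_combination husq

lemma rpow_ge_of_ge {b e t : ℝ} (hb : 1 ≤ b) (he : 0 < e) (ht : b ^ ((1:ℝ)/e) ≤ t) :
    b ≤ t ^ e := by
  calc b = (b ^ ((1:ℝ)/e)) ^ e := by
        rw [← Real.rpow_mul (by linarith), one_div, inv_mul_cancel₀ (ne_of_gt he), Real.rpow_one]
    _ ≤ t ^ e := Real.rpow_le_rpow (by positivity) ht he.le

lemma rpow_neg_half_eq {w : ℝ} (hw : 0 ≤ w) : w ^ (-(1:ℝ)/2) = (Real.sqrt w)⁻¹ := by
  rw [show (-(1:ℝ)/2) = -(1/2) by ring, Real.rpow_neg hw, ← Real.sqrt_eq_rpow]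

set_option maxHeartbeats 1000000 in
/-- leading-order asymptotics of `J_{B1}` with uniform error bound. -/
theorem stmt_18 (δ ε : ℝ) (hδ0 : 0 < δ) (hδ1 : δ < 1) (hε : 0 < ε) :
    ∃ C > 0, ∃ t₀ > 0, ∀ t ≥ t₀, ∀ a : ℝ,
      t ^ (-δ / 2 + ε) ≤ a → a ≤ t ^ (-δ / 3 - ε) →
      ∀ lam : ℝ, t ^ (δ - 1) / (1 - t ^ (δ - 1)) ≤ lam → lam ≤ t ^ (1 - δ) - 1 →
      ‖JB1 δ t lam (t ^ (δ - 1) * (1 - a)) -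
          Complex.exp (Complex.I * (t : ℂ) * ((Freal lam (1 - t ^ (δ - 1)) : ℝ) : ℂ) -
              Complex.I * ((omegL δ t lam : ℝ) : ℂ) ^ 2) *
            ((t ^ (-(1 : ℝ) / 2) : ℝ) : ℂ) * ((Real.sqrt (2 / (1 + lamc δ t)) : ℝ) : ℂ) *
            ∫ ξ in omegL δ t lam..(omegL δ t lam + a * Real.sqrt (lamc δ t * t / 2)),
              Complex.exp (Complex.I * (ξ : ℂ) ^ 2)‖ ≤
        C * t ^ (-(1 : ℝ) / 2 + 3 * δ / 2) * a ^ 4 := by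
  refine ⟨18, by norm_num, max 2 (max ((2:ℝ) ^ ((1:ℝ)/(1-δ))) (max ((2:ℝ) ^ ((3:ℝ)/δ)) ((8:ℝ) ^ ((1:ℝ)/(3*ε))))), by positivity, ?_⟩
  intro t ht a ha1 ha2 lam hlam1 hlam2
  -- basic facts about t
  have ht2 : (2:ℝ) ≤ t := le_trans (le_max_left _ _) ht
  have ht1 : (1:ℝ) < t := by linarith
  have ht0 : (0:ℝ) < t := by linarith
  -- notation
  set u : ℝ := t ^ (δ - 1) with hu
  set x₀ : ℝ := 1 - u with hx₀
  set lc : ℝ := lamc δ t with hlc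
  set ω : ℝ := omegL δ t lam with homeg
  set S : ℝ := lc * t / 2 with hS
  set sS : ℝ := Real.sqrt S with hsS
  set c : ℝ := sS / u with hcdef
  set d : ℝ := ω - c * x₀ with hd
  set k : ℝ := u * (1 - a) with hk
  -- t-power facts
  have hu_pos : 0 < u := Real.rpow_pos_of_pos ht0 _
  have hu_half : u ≤ 1/2 := by
    have hle : (2:ℝ) ^ ((1:ℝ)/(1-δ)) ≤ t :=
      le_trans (le_trans (le_max_left _ _) (le_max_right _ _)) ht
    have h2' : (2:ℝ) ≤ t ^ (1-δ) := rpow_ge_of_ge (by norm_num) (by linarith) hle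
    have heq : u = (t ^ (1-δ))⁻¹ := by
      rw [hu, show δ-1 = -(1-δ) by ring, Real.rpow_neg ht0.le]
    rw [heq, show (1:ℝ)/2 = 2⁻¹ by norm_num]
    exact inv_anti₀ (by norm_num) h2'
  have ha_pos : 0 < a := lt_of_lt_of_le (Real.rpow_pos_of_pos ht0 _) ha1
  have ha_half : a ≤ 1/2 := by
    have hle : (2:ℝ) ^ ((1:ℝ)/(δ/3)) ≤ t := by
      rw [one_div_div]
      exact le_trans (le_trans (le_trans (le_max_left _ _) (le_max_right _ _)) (le_max_right _ _)) ht
    have h2' : (2:ℝ) ≤ t ^ (δ/3) := rpow_ge_of_ge (by norm_num) (by positivity) hle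
    have h3 : a ≤ t ^ (-(δ/3)) := by
      refine le_trans ha2 (Real.rpow_le_rpow_of_exponent_le ht1.le (by linarith))
    have heq : t ^ (-(δ/3)) = (t ^ (δ/3))⁻¹ := Real.rpow_neg ht0.le _
    rw [heq] at h3
    calc a ≤ (t ^ (δ/3))⁻¹ := h3
      _ ≤ 2⁻¹ := inv_anti₀ (by norm_num) h2'
      _ = 1/2 := by norm_num
  have h8 : (8:ℝ) ≤ t ^ (3*ε) := by
    have hle : (8:ℝ) ^ ((1:ℝ)/(3*ε)) ≤ t :=
      le_trans (le_trans (le_trans (le_max_right _ _) (le_max_right _ _)) (le_max_right _ _)) ht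
    exact rpow_ge_of_ge (by norm_num) (by positivity) hle
  have ha_lb : t ^ (-δ/2) ≤ a := le_trans (Real.rpow_le_rpow_of_exponent_le ht1.le (by linarith)) ha1
  -- derived positivity
  have hx₀_half : (1:ℝ)/2 ≤ x₀ := by rw [hx₀]; linarith
  have hx₀_pos : 0 < x₀ := by linarith
  have hk_pos : 0 < k := by
    rw [hk]; exact mul_pos hu_pos (by linarith)
  have hk_le_u : k ≤ u := by
    rw [hk]
    calc u * (1 - a) = u - u * a := by ring
      _ ≤ u := by linarith [mul_pos hu_pos ha_pos]
  have hlc_eq : lc = u / (1 - u) := by rw [hlc, lamc, hu]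
  have hlc_pos : 0 < lc := by rw [hlc_eq]; positivity
  have hlam_pos : 0 < lam := lt_of_lt_of_le (by rw [← hlc_eq] at hlam1 ⊢; exact hlc_pos) hlam1
  have hS_pos : 0 < S := by rw [hS]; positivity
  have hsS_pos : 0 < sS := Real.sqrt_pos.mpr hS_pos
  have hsS_sq : sS ^ 2 = S := Real.sq_sqrt hS_pos.le
  have hc_pos : 0 < c := div_pos hsS_pos hu_pos
  have hc_ne : c ≠ 0 := ne_of_gt hc_pos
  have h1lc_pos : 0 < 1 + lc := by linarith
  -- key algebraic identities
  have hcu : c * u = sS := by rw [hcdef]; field_simp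
  have hA : c ^ 2 = t / (2 * x₀ * u) := by
    have h1 : c ^ 2 = S / u ^ 2 := by rw [hcdef, div_pow, hsS_sq]
    rw [h1, hS, hlc_eq, hx₀]
    field_simp
  have hB : 2 * ω * c = t * (Real.log lam - Real.log lc) := by
    have h1 : 2 * ω * c = sS ^ 2 * (2 * Real.log (lam / lc)) / ((1 + lc) * u) := by
      rw [homeg, omegL, ← hlc, ← hS, ← hsS, hcdef]
      field_simp
    rw [h1, hsS_sq, hS, ← Real.log_div (ne_of_gt hlam_pos) (ne_of_gt hlc_pos)]
    rw [hlc_eq, hx₀] at *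
    field_simp
    ring
  have hconst : t ^ (-(1:ℝ)/2) * Real.sqrt (2 / (1 + lc)) * c = (Real.sqrt u)⁻¹ := by
    have h1 : (2 / (1 + lc)) * S = u * t := by
      rw [hS, hlc_eq]
      have h1u : (1:ℝ) - u ≠ 0 := by linarith
      field_simp
      ring
    have h2 : Real.sqrt (2 / (1 + lc)) * sS = Real.sqrt u * Real.sqrt t := by
      rw [hsS, ← Real.sqrt_mul (by positivity) S, h1, Real.sqrt_mul hu_pos.le]
    have h3 : t ^ (-(1:ℝ)/2) = (Real.sqrt t)⁻¹ := rpow_neg_half_eq ht0.le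
    have hst : Real.sqrt t ≠ 0 := ne_of_gt (Real.sqrt_pos.mpr ht0)
    have hsu : Real.sqrt u ≠ 0 := ne_of_gt (Real.sqrt_pos.mpr hu_pos)
    have husq : Real.sqrt u * Real.sqrt u = u := Real.mul_self_sqrt hu_pos.le
    rw [h3, hcdef]
    exact sqrt_const_combine ht0 hu_pos h2
  have hendpt : 1 - k = x₀ + u * a := by rw [hk, hx₀]; ring
  -- the quadratic phase
  set T₂ : ℝ → ℝ := fun x => t * Freal lam x₀ - ω^2 + (c*x + d)^2 with hT₂
  set sqU : ℝ := Real.sqrt u with hsqU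
  have hsqU_pos : 0 < sqU := Real.sqrt_pos.mpr hu_pos
  set g₁ : ℝ → ℂ := fun x =>
    (((1 - x) ^ (-(1:ℝ)/2) : ℝ) : ℂ) * Complex.exp (Complex.I * ((t * Freal lam x : ℝ) : ℂ)) with hg₁
  set g₂ : ℝ → ℂ := fun x => ((sqU⁻¹ : ℝ) : ℂ) * Complex.exp (Complex.I * ((T₂ x : ℝ) : ℂ)) with hg₂
  -- Step B : JB1 = ∫ g₁
  have hJB1 : JB1 δ t lam (u * (1 - a)) = ∫ x in x₀..(1-k), g₁ x := by
    rw [JB1]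
    apply intervalIntegral.integral_congr
    intro x _
    rw [hg₁]
    push_cast
    ring_nf
  -- Step A : Main = ∫ g₂
  have hMain : Complex.exp (Complex.I * (t : ℂ) * ((Freal lam x₀ : ℝ) : ℂ) -
              Complex.I * ((ω : ℝ) : ℂ) ^ 2) *
            ((t ^ (-(1 : ℝ) / 2) : ℝ) : ℂ) * ((Real.sqrt (2 / (1 + lc)) : ℝ) : ℂ) *
            ∫ ξ in ω..(ω + a * sS), Complex.exp (Complex.I * (ξ : ℂ) ^ 2)
          = ∫ x in x₀..(1-k), g₂ x := by
    have hcv : (∫ x in x₀..(1-k), Complex.exp (Complex.I * (((c*x+d : ℝ)) : ℂ)^2))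
        = c⁻¹ • ∫ ξ in ω..(ω + a * sS), Complex.exp (Complex.I * (ξ:ℂ)^2) := by
      have h := intervalIntegral.integral_comp_mul_add (a := x₀) (b := 1-k)
          (f := fun ξ : ℝ => Complex.exp (Complex.I * (ξ:ℂ)^2)) hc_ne d
      rw [show c*x₀+d = ω by rw [hd]; ring,
          show c*(1-k)+d = ω + a*sS by rw [hd, hendpt]; linear_combination a * hcu] at h
      exact h
    have hfres : (∫ ξ in ω..(ω + a * sS), Complex.exp (Complex.I * (ξ:ℂ)^2))
        = (c : ℂ) * ∫ x in x₀..(1-k), Complex.exp (Complex.I * (((c*x+d : ℝ)) : ℂ)^2) := by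
      rw [hcv, Complex.real_smul, Complex.ofReal_inv, ← mul_assoc,
        mul_inv_cancel₀ (by exact_mod_cast hc_ne), one_mul]
    rw [hfres]
    have hKc : ((t ^ (-(1:ℝ)/2) : ℝ) : ℂ) * ((Real.sqrt (2 / (1 + lc)) : ℝ) : ℂ) * ((c : ℝ) : ℂ)
        = ((Real.sqrt u)⁻¹ : ℝ) := by
      rw [← Complex.ofReal_mul, ← Complex.ofReal_mul, hconst]
    calc Complex.exp (Complex.I * (t : ℂ) * ((Freal lam x₀ : ℝ) : ℂ) -
              Complex.I * ((ω : ℝ) : ℂ) ^ 2) *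
            ((t ^ (-(1 : ℝ) / 2) : ℝ) : ℂ) * ((Real.sqrt (2 / (1 + lc)) : ℝ) : ℂ) *
            ((c : ℂ) * ∫ x in x₀..(1-k), Complex.exp (Complex.I * (((c*x+d : ℝ)) : ℂ)^2))
        = (Complex.exp (Complex.I * (t : ℂ) * ((Freal lam x₀ : ℝ) : ℂ) -
              Complex.I * ((ω : ℝ) : ℂ) ^ 2) *
            (((t ^ (-(1 : ℝ) / 2) : ℝ) : ℂ) * ((Real.sqrt (2 / (1 + lc)) : ℝ) : ℂ) * ((c:ℝ) : ℂ))) *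
            ∫ x in x₀..(1-k), Complex.exp (Complex.I * (((c*x+d : ℝ)) : ℂ)^2) := by ring
      _ = ∫ x in x₀..(1-k), (Complex.exp (Complex.I * (t : ℂ) * ((Freal lam x₀ : ℝ) : ℂ) -
              Complex.I * ((ω : ℝ) : ℂ) ^ 2) * (((Real.sqrt u)⁻¹ : ℝ) : ℂ)) *
              Complex.exp (Complex.I * (((c*x+d : ℝ)) : ℂ)^2) := by
            rw [hKc, ← intervalIntegral.integral_const_mul]
      _ = ∫ x in x₀..(1-k), g₂ x := by
            apply intervalIntegral.integral_congr
            intro x _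
            rw [hg₂]
            have hexp : Complex.exp (Complex.I * (t : ℂ) * ((Freal lam x₀ : ℝ) : ℂ) -
                Complex.I * ((ω : ℝ) : ℂ) ^ 2) * Complex.exp (Complex.I * (((c*x+d : ℝ)) : ℂ)^2)
                = Complex.exp (Complex.I * ((T₂ x : ℝ) : ℂ)) := by
              rw [← Complex.exp_add]
              congr 1
              simp only [hT₂]
              push_cast
              ring
            rw [hsqU]
            calc (Complex.exp (Complex.I * (t : ℂ) * ((Freal lam x₀ : ℝ) : ℂ) -
                Complex.I * ((ω : ℝ) : ℂ) ^ 2) * (((Real.sqrt u)⁻¹ : ℝ) : ℂ)) *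
                Complex.exp (Complex.I * (((c*x+d : ℝ)) : ℂ)^2)
                = (((Real.sqrt u)⁻¹ : ℝ) : ℂ) *
                  (Complex.exp (Complex.I * (t : ℂ) * ((Freal lam x₀ : ℝ) : ℂ) -
                    Complex.I * ((ω : ℝ) : ℂ) ^ 2) *
                   Complex.exp (Complex.I * (((c*x+d : ℝ)) : ℂ)^2)) := by ring
              _ = (((Real.sqrt u)⁻¹ : ℝ) : ℂ) * Complex.exp (Complex.I * ((T₂ x : ℝ) : ℂ)) := by
                  rw [hexp]
  -- integrability
  have hx₀_le : x₀ ≤ 1 - k := by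
    rw [hendpt]; linarith [mul_pos hu_pos ha_pos]
  have hint1 : IntervalIntegrable g₁ volume x₀ (1-k) := by
    apply ContinuousOn.intervalIntegrable
    intro x hx
    rw [Set.uIcc_of_le hx₀_le, Set.mem_Icc] at hx
    obtain ⟨h1, h2⟩ := hx
    have hx_pos : (0:ℝ) < x := by linarith
    have h1x_pos : (0:ℝ) < 1 - x := by linarith [hk_pos]
    apply ContinuousAt.continuousWithinAt
    rw [hg₁]
    apply ContinuousAt.mul
    · apply Complex.continuous_ofReal.continuousAt.comp
      exact (Real.continuousAt_rpow_const (1-x) (-(1:ℝ)/2)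
        (Or.inl (ne_of_gt h1x_pos))).comp (continuousAt_const.sub continuousAt_id)
    · apply Complex.continuous_exp.continuousAt.comp
      apply ContinuousAt.mul continuousAt_const
      apply Complex.continuous_ofReal.continuousAt.comp
      apply ContinuousAt.mul continuousAt_const
      have hF : ContinuousAt (fun y : ℝ =>
          (1 - y) * Real.log (1 - y) + y * Real.log y + y * Real.log lam) x := by
        apply ContinuousAt.add
        apply ContinuousAt.add
        · exact (continuousAt_const.sub continuousAt_id).mul
            ((Real.continuousAt_log (ne_of_gt h1x_pos)).comp
              (continuousAt_const.sub continuousAt_id))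
        · exact continuousAt_id.mul (Real.continuousAt_log (ne_of_gt hx_pos))
        · exact continuousAt_id.mul continuousAt_const
      exact hF
  have hint2 : IntervalIntegrable g₂ volume x₀ (1-k) := by
    apply Continuous.intervalIntegrable
    rw [hg₂]
    apply Continuous.mul continuous_const
    apply Complex.continuous_exp.comp
    apply Continuous.mul continuous_const
    apply Complex.continuous_ofReal.comp
    rw [hT₂]
    fun_prop
  -- pointwise bound
  have hsqU_ne : sqU ≠ 0 := ne_of_gt hsqU_pos
  have husq : sqU * sqU = u := by rw [hsqU]; exact Real.mul_self_sqrt hu_pos.le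
  have hu_le1 : u ≤ 1 := by linarith
  have htu : t * u = t ^ δ := by
    rw [show δ = 1 + (δ-1) by ring, Real.rpow_add ht0, Real.rpow_one, hu]
  have ha3 : a^3 ≤ t ^ (-δ-3*ε) := by
    have h1 := Real.rpow_le_rpow ha_pos.le ha2 (by norm_num : (0:ℝ) ≤ 3)
    rw [← Real.rpow_mul ht0.le] at h1
    calc a^3 = a^(3:ℝ) := by rw [← Real.rpow_natCast a 3]; norm_num
      _ ≤ t^((-δ/3-ε)*3) := h1
      _ = t^(-δ-3*ε) := by congr 1; ring
  have hsmall : 8 * (t * u) * a^3 ≤ 1 := by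
    have h1 : 8 * (t*u) * a^3 ≤ 8 * t^δ * t^(-δ-3*ε) := by
      rw [htu]
      exact mul_le_mul_of_nonneg_left ha3 (by positivity)
    have h2 : (8:ℝ) * t^δ * t^(-δ-3*ε) = 8 * (t^(3*ε))⁻¹ := by
      rw [mul_assoc, ← Real.rpow_add ht0, show δ + (-δ-3*ε) = -(3*ε) by ring,
        Real.rpow_neg ht0.le]
    have h3 : (0:ℝ) < t^(3*ε) := Real.rpow_pos_of_pos ht0 _
    have h4 : (8:ℝ) * (t^(3*ε))⁻¹ ≤ 1 := by
      rw [← div_eq_mul_inv, div_le_one h3]; exact h8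
    linarith
  have hpt : ∀ x ∈ Set.uIoc x₀ (1-k), ‖g₁ x - g₂ x‖ ≤ sqU⁻¹ * (2*a + 16 * t * u * a^3) := by
    intro x hx
    rw [Set.uIoc_of_le hx₀_le, Set.mem_Ioc] at hx
    obtain ⟨hx1, hx2⟩ := hx
    have hxe : 0 ≤ x - x₀ := by linarith
    have hxe2 : x - x₀ ≤ u * a := by rw [hendpt] at hx2; linarith
    have h1x_pos : 0 < 1 - x := by linarith [hk_pos]
    have h1x_le : 1 - x ≤ u := by rw [hx₀] at hx1; linarith
    have hk_le : k ≤ 1 - x := by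
      have he : x₀ + u * a = 1 - u * (1 - a) := by rw [hx₀]; ring
      rw [hendpt, he] at hx2; rw [hk]; linarith
    -- amplitude bound
    have hA₁ : (1-x) ^ (-(1:ℝ)/2) = (Real.sqrt (1-x))⁻¹ := rpow_neg_half_eq h1x_pos.le
    have hs1x_pos : 0 < Real.sqrt (1-x) := Real.sqrt_pos.mpr h1x_pos
    have hA₂_le : sqU⁻¹ ≤ (Real.sqrt (1-x))⁻¹ := by
      rw [hsqU]
      exact inv_anti₀ hs1x_pos (Real.sqrt_le_sqrt h1x_le)
    have hampl : (Real.sqrt (1-x))⁻¹ - sqU⁻¹ ≤ sqU⁻¹ * (2*a) := by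
      have hsk : Real.sqrt k ≤ Real.sqrt (1-x) := Real.sqrt_le_sqrt hk_le
      have hsk_pos : 0 < Real.sqrt k := Real.sqrt_pos.mpr hk_pos
      have h5 : (Real.sqrt (1-x))⁻¹ ≤ (Real.sqrt k)⁻¹ := inv_anti₀ hsk_pos hsk
      have hkfac : Real.sqrt k = sqU * Real.sqrt (1-a) := by
        rw [hk, hsqU, Real.sqrt_mul hu_pos.le]
      have h1a_pos : (0:ℝ) < 1 - a := by linarith
      have hs1a_pos : 0 < Real.sqrt (1-a) := Real.sqrt_pos.mpr h1a_pos
      have hsra : 1 - a ≤ Real.sqrt (1-a) := by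
        nth_rewrite 1 [show (1:ℝ) - a = Real.sqrt ((1-a)^2) from (Real.sqrt_sq h1a_pos.le).symm]
        apply Real.sqrt_le_sqrt
        linarith [mul_nonneg (by linarith : (0:ℝ) ≤ 1 - a) ha_pos.le]
      have h6 : (Real.sqrt (1-a))⁻¹ ≤ (1-a)⁻¹ := inv_anti₀ h1a_pos hsra
      have h7 : (1-a)⁻¹ ≤ 1 + 2*a := by
        rw [inv_le_iff_one_le_mul₀ h1a_pos]
        linarith [mul_nonneg ha_pos.le (by linarith : (0:ℝ) ≤ 1 - 2*a)]
      have h8' : (Real.sqrt k)⁻¹ = sqU⁻¹ * (Real.sqrt (1-a))⁻¹ := by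
        rw [hkfac, mul_inv]
      have h9 : (Real.sqrt k)⁻¹ ≤ sqU⁻¹ * (1 + 2*a) := by
        rw [h8']
        apply mul_le_mul_of_nonneg_left (le_trans h6 h7) (by positivity)
      have : (Real.sqrt (1-x))⁻¹ ≤ sqU⁻¹ * (1 + 2*a) := le_trans h5 h9
      linarith [this]
    -- phase bound
    have hx_half : (1:ℝ)/2 ≤ x := by linarith
    have hDa := psi_taylor (m := 1/2) (by norm_num) hx₀_half hx_half (b := x₀) (y := x)
    have hDb := psi_taylor (m := k) hk_pos hk_le_u hk_le (b := u) (y := 1-x)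
    have habs_e : |x - x₀| = x - x₀ := abs_of_nonneg hxe
    have habs_e' : |1 - x - u| = x - x₀ := by
      rw [hx₀]; rw [show 1 - x - u = -(x - (1-u)) by ring, abs_neg, ← hx₀, habs_e]
    have hT₂x : T₂ x = t * Freal lam x₀ + (2*ω*c)*(x-x₀) + c^2*(x-x₀)^2 := by
      simp only [hT₂]; rw [hd]; ring
    have hlog_lc : Real.log lc = Real.log u - Real.log x₀ := by
      rw [hlc_eq, hx₀, Real.log_div (ne_of_gt hu_pos) (by rw [← hx₀]; exact ne_of_gt hx₀_pos)]
    have hid : t * Freal lam x - T₂ x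
        = t * ((x * Real.log x - x₀ * Real.log x₀ - (Real.log x₀ + 1)*(x - x₀) - (x-x₀)^2/(2*x₀))
             + ((1-x) * Real.log (1-x) - u * Real.log u - (Real.log u + 1)*((1-x) - u)
                - ((1-x)-u)^2/(2*u))) := by
      rw [hT₂x, hB, hA, hlog_lc]
      simp only [Freal, hx₀]
      rw [show (1:ℝ) - (1-u) = u by ring]
      have hu_ne : u ≠ 0 := ne_of_gt hu_pos
      have hx₀_ne : (1:ℝ) - u ≠ 0 := by rw [← hx₀]; exact ne_of_gt hx₀_pos
      field_simp
      ring
    have hDa' : |x * Real.log x - x₀ * Real.log x₀ - (Real.log x₀ + 1)*(x - x₀) - (x-x₀)^2/(2*x₀)|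
        ≤ 4 * (u*a^3) := by
      calc _ ≤ |x - x₀|^3 / (1/2:ℝ)^2 := hDa
        _ = 4 * (x-x₀)^3 := by rw [habs_e]; ring
        _ ≤ 4 * (u*a)^3 := by linarith [pow_le_pow_left₀ hxe hxe2 3]
        _ = 4 * (u^3 * a^3) := by ring
        _ ≤ 4 * (u*a^3) := by
            have hcube : u^3 ≤ u := cube_le_self hu_pos hu_le1
            have h3 := mul_le_mul_of_nonneg_right hcube (pow_nonneg ha_pos.le 3)
            linarith
    have hDb' : |(1-x) * Real.log (1-x) - u * Real.log u - (Real.log u + 1)*((1-x) - u)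
        - ((1-x)-u)^2/(2*u)| ≤ 4 * (u*a^3) := by
      calc _ ≤ |1 - x - u|^3 / k^2 := hDb
        _ = (x-x₀)^3 / k^2 := by rw [habs_e']
        _ ≤ 4 * (u*a^3) := by
            rw [div_le_iff₀ (by positivity)]
            have h1 : (x-x₀)^3 ≤ (u*a)^3 := pow_le_pow_left₀ hxe hxe2 3
            have h2 : u^2 * (1/2:ℝ)^2 ≤ k^2 := by
              rw [hk, mul_pow]
              apply mul_le_mul_of_nonneg_left _ (sq_nonneg u)
              apply pow_le_pow_left₀ (by norm_num) (by linarith) 2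
            calc (x-x₀)^3 ≤ (u*a)^3 := h1
              _ = (u*a^3) * u^2 := by ring
              _ ≤ (u*a^3) * (4*k^2) := by
                  apply mul_le_mul_of_nonneg_left _ (by positivity)
                  linarith
              _ = 4*(u*a^3)*k^2 := by ring
    have hphase : |t * Freal lam x - T₂ x| ≤ 8 * (t*u) * a^3 := by
      rw [hid, abs_mul, abs_of_pos ht0]
      calc t * |_| ≤ t * (4*(u*a^3) + 4*(u*a^3)) := by
            apply mul_le_mul_of_nonneg_left _ ht0.le
            exact le_trans (abs_add_le _ _) (add_le_add hDa' hDb')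
        _ = 8 * (t*u) * a^3 := by ring
    have hexp := expI_sub (t * Freal lam x) (T₂ x) (le_trans hphase hsmall)
    -- combine
    have hsplit : g₁ x - g₂ x
        = (((1-x) ^ (-(1:ℝ)/2) - sqU⁻¹ : ℝ) : ℂ) *
            Complex.exp (Complex.I * ((t * Freal lam x : ℝ) : ℂ))
          + ((sqU⁻¹ : ℝ) : ℂ) * (Complex.exp (Complex.I * ((t * Freal lam x : ℝ) : ℂ))
              - Complex.exp (Complex.I * ((T₂ x : ℝ) : ℂ))) := by
      simp only [hg₁, hg₂]
      push_cast
      ring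
    rw [hsplit]
    have hnorm1 : ‖(((1-x) ^ (-(1:ℝ)/2) - sqU⁻¹ : ℝ) : ℂ) *
        Complex.exp (Complex.I * ((t * Freal lam x : ℝ) : ℂ))‖ ≤ sqU⁻¹ * (2*a) := by
      have habs1 : ‖Complex.exp (Complex.I * ((t * Freal lam x : ℝ) : ℂ))‖ = 1 := by
        rw [Complex.norm_exp]
        simp
      rw [norm_mul, habs1, mul_one,
        Complex.norm_real, Real.norm_eq_abs]
      rw [abs_of_nonneg (by rw [hA₁]; linarith [hA₂_le] : (0:ℝ) ≤ (1-x) ^ (-(1:ℝ)/2) - sqU⁻¹)]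
      rw [hA₁]
      linarith [hampl]
    have hnorm2 : ‖((sqU⁻¹ : ℝ) : ℂ) * (Complex.exp (Complex.I * ((t * Freal lam x : ℝ) : ℂ))
        - Complex.exp (Complex.I * ((T₂ x : ℝ) : ℂ)))‖ ≤ sqU⁻¹ * (16 * (t*u) * a^3) := by
      rw [norm_mul, Complex.norm_real, Real.norm_eq_abs,
        abs_of_nonneg (by positivity : (0:ℝ) ≤ sqU⁻¹)]
      apply mul_le_mul_of_nonneg_left _ (by positivity)
      calc ‖_‖ ≤ 2 * |t * Freal lam x - T₂ x| := hexp
        _ ≤ 2 * (8 * (t*u) * a^3) := by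
            apply mul_le_mul_of_nonneg_left hphase (by norm_num)
        _ = 16 * (t*u) * a^3 := by ring
    calc ‖_ + _‖ ≤ _ + _ := norm_add_le _ _
      _ ≤ sqU⁻¹ * (2*a) + sqU⁻¹ * (16 * (t*u) * a^3) := add_le_add hnorm1 hnorm2
      _ = sqU⁻¹ * (2*a + 16 * t * u * a^3) := by ring
  -- combine
  rw [hJB1, hMain, ← intervalIntegral.integral_sub hint1 hint2]
  have hbound := intervalIntegral.norm_integral_le_of_norm_le_const hpt
  calc ‖∫ x in x₀..(1-k), (g₁ x - g₂ x)‖ ≤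
      sqU⁻¹ * (2*a + 16 * t * u * a^3) * |1 - k - x₀| := hbound
    _ = sqU * (2*a^2 + 16 * t * u * a^4) := by
        rw [show 1 - k - x₀ = u * a by rw [hendpt]; ring,
          abs_of_nonneg (by positivity : (0:ℝ) ≤ u * a)]
        rw [show u = sqU * sqU from husq.symm]
        field_simp
    _ ≤ 18 * t ^ (-(1:ℝ)/2 + 3*δ/2) * a^4 := by
        have hsqU_eq : sqU = t ^ ((δ-1)/2) := by
          rw [hsqU, hu, Real.sqrt_eq_rpow, ← Real.rpow_mul ht0.le]
          congr 1
          ring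
        have hpow1 : sqU * (t * u) = t ^ (-(1:ℝ)/2 + 3*δ/2) := by
          have h1 : t ^ (-(1:ℝ)/2 + 3*δ/2) = t^((δ-1)/2) * (t^(1:ℝ) * t^(δ-1)) := by
            rw [← Real.rpow_add ht0, ← Real.rpow_add ht0]
            congr 1
            ring
          rw [h1, Real.rpow_one, ← hsqU_eq, ← hu]
        have hpow2 : t^((δ-1)/2) * t^δ = t ^ (-(1:ℝ)/2 + 3*δ/2) := by
          rw [← Real.rpow_add ht0]
          congr 1
          ring
        have hta : 1 ≤ t^δ * a^2 := by
          have h1 : (t^(-δ/2):ℝ)^2 = t^(-δ) := by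
            rw [← Real.rpow_natCast (t ^ (-δ/2)) 2, ← Real.rpow_mul ht0.le]
            norm_num
          have h2 : t^(-δ) ≤ a^2 := by
            rw [← h1]
            exact pow_le_pow_left₀ (Real.rpow_pos_of_pos ht0 _).le ha_lb 2
          have h3 : t^δ * t^(-δ) = 1 := by
            rw [← Real.rpow_add ht0]
            norm_num
          calc (1:ℝ) = t^δ * t^(-δ) := h3.symm
            _ ≤ t^δ * a^2 := by
                apply mul_le_mul_of_nonneg_left h2 (Real.rpow_pos_of_pos ht0 _).le
        have hterm1 : sqU * (2*a^2) ≤ 2 * t ^ (-(1:ℝ)/2 + 3*δ/2) * a^4 := by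
          rw [← hpow2, hsqU_eq]
          have h4 : a^2 ≤ t^δ * a^4 := by
            have h6 := mul_le_mul_of_nonneg_left hta (sq_nonneg a)
            calc a^2 = a^2 * 1 := by ring
              _ ≤ a^2 * (t^δ * a^2) := h6
              _ = t^δ * a^4 := by ring
          have h5 : (0:ℝ) < t^((δ-1)/2) := Real.rpow_pos_of_pos ht0 _
          calc t^((δ-1)/2) * (2*a^2) = 2*(t^((δ-1)/2) * a^2) := by ring
            _ ≤ 2*(t^((δ-1)/2) * (t^δ * a^4)) := by
                have h7 := mul_le_mul_of_nonneg_left h4 h5.le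
                linarith
            _ = 2 * (t^((δ-1)/2) * t^δ) * a^4 := by ring
        have hterm2 : sqU * (16 * t * u * a^4) = 16 * t ^ (-(1:ℝ)/2 + 3*δ/2) * a^4 := by
          rw [← hpow1]; ring
        have ht18 : (0:ℝ) < t ^ (-(1:ℝ)/2 + 3*δ/2) := Real.rpow_pos_of_pos ht0 _
        calc sqU * (2*a^2 + 16 * t * u * a^4) = sqU * (2*a^2) + sqU * (16*t*u*a^4) := by ring
          _ ≤ 2 * t ^ (-(1:ℝ)/2 + 3*δ/2) * a^4 + 16 * t ^ (-(1:ℝ)/2 + 3*δ/2) * a^4 := by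
              rw [hterm2]; linarith [hterm1]
          _ = 18 * t ^ (-(1:ℝ)/2 + 3*δ/2) * a^4 := by ring
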